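/- For every j : Fin 5, every point x of convexHull ℝ V satisfies x j ≥ 0, and the intersection of convexHull ℝ V with the hyperplane {x | x j = 0} equals convexHull ℝ (T j). In other words, each tetrahedral facet of the rectified 5-cell lies in the hyperplane x_j = 0 and is the convex hull of the four vertices lying on that hyperplane. -/

import Mathlib

noncomputable section

/-- The vertex set of the Euclidean rectified 5-cell: all coordinate
permutations of the point `(1,1,1,0,0)`. -/
def V : Set (EuclideanSpace ℝ (Fin 5)) :=
  {x | (∀ i, x i = 0 ∨ x i = 1) ∧ (∑ i, x i) = 3}

/-- The vertex set of the tetrahedral facet labelled `j`. -/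
def T (j : Fin 5) : Set (EuclideanSpace ℝ (Fin 5)) := {v ∈ V | v j = 0}

lemma proj_isLinear (j : Fin 5) :
    IsLinearMap ℝ (fun x : EuclideanSpace ℝ (Fin 5) => x j) := by
  constructor <;> intros <;> rfl

lemma hull_nonneg (j : Fin 5) : ∀ x ∈ convexHull ℝ V, 0 ≤ x j := by
  intro x hx
  have h : convexHull ℝ V ⊆ {x : EuclideanSpace ℝ (Fin 5) | 0 ≤ x j} := by
    apply convexHull_min
    · rintro v ⟨hv, -⟩
      rcases hv j with h | h <;> simp [h]
    · exact convex_halfSpace_ge (proj_isLinear j) 0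
  exact h hx

/-- Every point of the rectified 5-cell has nonnegative `j`-th coordinate,
and the intersection of the rectified 5-cell with the hyperplane `x j = 0`
is the tetrahedral facet `convexHull ℝ (T j)`. -/
theorem tetrahedral_facet (j : Fin 5) :
    (∀ x ∈ convexHull ℝ V, 0 ≤ x j) ∧
    convexHull ℝ V ∩ {x | x j = 0} = convexHull ℝ (T j) := by
  refine ⟨hull_nonneg j, ?_⟩
  apply Set.Subset.antisymm
  · rintro x ⟨hx, hxj⟩
    rw [convexHull_eq] at hx
    obtain ⟨ι, t, w, z, hw0, hw1, hz, hc⟩ := hx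
    have hsum : x = ∑ i ∈ t, w i • z i := by
      rw [← hc, Finset.centerMass_eq_of_sum_1 _ _ hw1]
    have hxj' : ∑ i ∈ t, w i * z i j = 0 := by
      have := congrArg (fun y : EuclideanSpace ℝ (Fin 5) => y j) hsum
      simp only at this
      rw [← hxj, this, WithLp.ofLp_sum, Finset.sum_apply]
      simp [PiLp.smul_apply, smul_eq_mul]
    have hterm : ∀ i ∈ t, w i * z i j = 0 := by
      intro i hi
      have hnn : ∀ i ∈ t, 0 ≤ w i * z i j := by
        intro i hi
        have : 0 ≤ z i j := by
          rcases (hz i hi).1 j with h | h <;> simp [h]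
        exact mul_nonneg (hw0 i hi) this
      exact (Finset.sum_eq_zero_iff_of_nonneg hnn).1 hxj' i hi
    rw [← hc, ← Finset.centerMass_filter_ne_zero (w := w) z]
    apply Finset.centerMass_mem_convexHull
    · intro i hi
      exact hw0 i (Finset.mem_filter.1 hi).1
    · have : ∑ i ∈ t.filter (w · ≠ 0), w i = 1 := by
        rw [Finset.sum_filter_ne_zero, hw1]
      rw [this]; norm_num
    · intro i hi
      obtain ⟨hit, hwi⟩ := Finset.mem_filter.1 hi
      refine ⟨hz i hit, ?_⟩
      rcases mul_eq_zero.1 (hterm i hit) with h' | h'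
      · exact absurd h' hwi
      · exact h'
  · apply Set.subset_inter
    · exact convexHull_mono (fun v hv => hv.1)
    · apply convexHull_min
      · exact fun v hv => hv.2
      · exact convex_hyperplane (proj_isLinear j) 0
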